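/- Let ω ∈ L⊗ℝ and Ω ∈ L⊗ℂ be such that (ω·γ)² + |Ω·γ|² ≥ 1 for every nonzero γ ∈ L with γ·γ ≥ −2 and γ ∉ {α₀, −α₀}. Then for every integer k ≥ 1 and every family γ₁, …, γ_k of nonzero elements of L with γ_i·γ_i ≥ −2 for each i and γ₁ + ⋯ + γ_k = α₁ − α₂, one has ∑_{i=1}^{k} √((ω·γ_i)² + |Ω·γ_i|²) ≥ 2. -/

import Mathlib

open scoped BigOperators

/-- The Cartan matrix of type E8, with the trivalent node of the Dynkin diagram
listed first (index 0), followed by its three neighbours (indices 1,2,3);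
index 4 continues the arm through 2, and indices 5,6,7 the arm through 3. -/
def CartanE8 : Matrix (Fin 8) (Fin 8) ℤ :=
  !![ 2,-1,-1,-1, 0, 0, 0, 0;
     -1, 2, 0, 0, 0, 0, 0, 0;
     -1, 0, 2, 0,-1, 0, 0, 0;
     -1, 0, 0, 2, 0,-1, 0, 0;
      0, 0,-1, 0, 2, 0, 0, 0;
      0, 0, 0,-1, 0, 2,-1, 0;
      0, 0, 0, 0, 0,-1, 2,-1;
      0, 0, 0, 0, 0, 0,-1, 2]

/-- Index type for the K3 lattice: two copies of `Fin 8` (the two `-E8` blocks,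
bases α and β) and two copies of `Fin 3` (the ξ's and η's of the three
hyperbolic blocks). -/
abbrev K3Idx : Type := (Fin 8 ⊕ Fin 8) ⊕ (Fin 3 ⊕ Fin 3)

/-- Gram matrix of the K3 lattice `-E8 ⊕ -E8 ⊕ H ⊕ H ⊕ H`. -/
def K3Gram : K3Idx → K3Idx → ℤ
  | .inl (.inl i), .inl (.inl j) => -CartanE8 i j
  | .inl (.inr i), .inl (.inr j) => -CartanE8 i j
  | .inr (.inl i), .inr (.inr j) => if i = j then 1 else 0
  | .inr (.inr i), .inr (.inl j) => if i = j then 1 else 0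
  | _, _ => 0

/-- The K3 lattice: free ℤ-module of rank 22. -/
abbrev K3L : Type := K3Idx → ℤ

def alp (i : Fin 8) : K3L := Pi.single (.inl (.inl i)) 1
def bet (i : Fin 8) : K3L := Pi.single (.inl (.inr i)) 1
def xiv (j : Fin 3) : K3L := Pi.single (.inr (.inl j)) 1
def etav (j : Fin 3) : K3L := Pi.single (.inr (.inr j)) 1

/-- The intersection form on the K3 lattice. -/
def bI (x y : K3L) : ℤ := ∑ i, ∑ j, x i * K3Gram i j * y j

/-- The ℝ-bilinear extension of the intersection form to `L ⊗ ℝ`. -/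
def bR (x y : K3Idx → ℝ) : ℝ := ∑ i, ∑ j, x i * (K3Gram i j : ℝ) * y j

/-- The ℂ-bilinear extension of the intersection form to `L ⊗ ℂ`. -/
noncomputable def bC (x y : K3Idx → ℂ) : ℂ := ∑ i, ∑ j, x i * (K3Gram i j : ℂ) * y j

/-- Inclusion `L → L ⊗ ℝ`. -/
def toR (x : K3L) : K3Idx → ℝ := fun i => (x i : ℝ)

/-- Inclusion `L → L ⊗ ℂ`. -/
noncomputable def toC (x : K3L) : K3Idx → ℂ := fun i => (x i : ℂ)

/-- Complex conjugation on `L ⊗ ℂ`. -/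
noncomputable def conjC (x : K3Idx → ℂ) : K3Idx → ℂ := fun i => starRingEnd ℂ (x i)

lemma bI_sub_left (x y z : K3L) : bI (x - y) z = bI x z - bI y z := by
  simp only [bI, ← Finset.sum_sub_distrib]
  refine Finset.sum_congr rfl fun i _ => Finset.sum_congr rfl fun j _ => ?_
  simp [sub_mul]

lemma bI_sub_right (x y z : K3L) : bI x (y - z) = bI x y - bI x z := by
  simp only [bI, ← Finset.sum_sub_distrib]
  refine Finset.sum_congr rfl fun i _ => Finset.sum_congr rfl fun j _ => ?_
  simp [mul_sub]

lemma bI_smul_left (m : ℤ) (x y : K3L) : bI (m • x) y = m * bI x y := by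
  simp only [bI, Finset.mul_sum]
  refine Finset.sum_congr rfl fun i _ => Finset.sum_congr rfl fun j _ => ?_
  simp [smul_eq_mul]; ring

lemma bI_smul_right (m : ℤ) (x y : K3L) : bI x (m • y) = m * bI x y := by
  simp only [bI, Finset.mul_sum]
  refine Finset.sum_congr rfl fun i _ => Finset.sum_congr rfl fun j _ => ?_
  simp [smul_eq_mul]; ring

lemma bI_alp (a b : Fin 8) : bI (alp a) (alp b) = -CartanE8 a b := by
  simp [bI, alp, Pi.single_apply, Finset.sum_ite_eq', K3Gram]

lemma bI_key (m : ℤ) :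
    bI (alp 1 - alp 2 - m • alp 0) (alp 1 - alp 2 - m • alp 0) = -4 - 2 * m ^ 2 := by
  simp only [bI_sub_left, bI_sub_right, bI_smul_left, bI_smul_right, bI_alp]
  have e : ∀ a b : Fin 3, CartanE8 (Fin.castLE (by omega) a) (Fin.castLE (by omega) b) = ![![2,-1,-1],![-1,2,0],![-1,0,2]] a b := by decide
  have e00 := e 0 0; have e01 := e 0 1; have e02 := e 0 2; have e10 := e 1 0; have e11 := e 1 1
  have e12 := e 1 2; have e20 := e 2 0; have e21 := e 2 1; have e22 := e 2 2
  simp at e00 e01 e02 e10 e11 e12 e20 e21 e22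
  rw [e00, e01, e02, e10, e11, e12, e20, e21, e22]
  ring


/-- The homological core of the main theorem: if `(ω·γ)² + |Ω·γ|² ≥ 1` for every
nonzero class `γ` of square `≥ −2` other than `±α₀`, then any decomposition
`γ₁ + ⋯ + γ_k = α₁ − α₂` into nonzero classes of square `≥ −2` satisfies
`∑ᵢ √((ω·γᵢ)² + |Ω·γᵢ|²) ≥ 2`. -/
theorem total_area_ge_two (ω : K3Idx → ℝ) (Ω : K3Idx → ℂ)
    (h : ∀ γ : K3L, γ ≠ 0 → -2 ≤ bI γ γ → γ ≠ alp 0 → γ ≠ -alp 0 →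
      1 ≤ (bR ω (toR γ)) ^ 2 + (‖bC Ω (toC γ)‖) ^ 2) :
    ∀ k : ℕ, 1 ≤ k → ∀ γ : Fin k → K3L,
      (∀ i, γ i ≠ 0) → (∀ i, -2 ≤ bI (γ i) (γ i)) →
      (∑ i, γ i) = alp 1 - alp 2 →
      2 ≤ ∑ i, Real.sqrt
        ((bR ω (toR (γ i))) ^ 2 + (‖bC Ω (toC (γ i))‖) ^ 2) := by
  intro k hk γ hne hsq hsum
  classical
  set f : Fin k → ℝ := fun i =>
    Real.sqrt ((bR ω (toR (γ i))) ^ 2 + (‖bC Ω (toC (γ i))‖) ^ 2) with hf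
  set S := Finset.univ.filter (fun i => γ i ≠ alp 0 ∧ γ i ≠ -alp 0) with hS
  have hc : ∀ i, i ∉ S → γ i = (γ i (.inl (.inl 0))) • alp 0 := by
    intro i hi
    simp only [hS, Finset.mem_filter, Finset.mem_univ, true_and, not_and_or, not_not] at hi
    rcases hi with h' | h' <;> rw [h'] <;> simp [alp]
  by_cases h2 : 2 ≤ S.card
  · have h1 : ∀ i ∈ S, (1:ℝ) ≤ f i := by
      intro i hi
      simp only [hS, Finset.mem_filter, Finset.mem_univ, true_and] at hi
      have hx := h (γ i) (hne i) (hsq i) hi.1 hi.2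
      rw [hf]
      calc (1:ℝ) = Real.sqrt 1 := Real.sqrt_one.symm
        _ ≤ _ := Real.sqrt_le_sqrt hx
    calc (2:ℝ) = ((2:ℕ):ℝ) := by norm_num
      _ ≤ (S.card : ℝ) := by exact_mod_cast h2
      _ ≤ ∑ i ∈ S, f i := by
          have := Finset.card_nsmul_le_sum S f 1 h1
          simpa using this
      _ ≤ ∑ i, f i :=
          Finset.sum_le_sum_of_subset_of_nonneg (Finset.subset_univ S)
            (fun i _ _ => Real.sqrt_nonneg _)
  · push_neg at h2
    exfalso
    have hcard : S.card = 0 ∨ S.card = 1 := by omega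
    rcases hcard with hc0 | hc1
    · have hSe : S = ∅ := Finset.card_eq_zero.mp hc0
      have h1 := congrFun hsum (.inl (.inl 1))
      rw [Finset.sum_apply] at h1
      have hz : ∀ i, (γ i) (.inl (.inl 1)) = 0 := by
        intro i
        rw [hc i (by simp [hSe])]
        simp [alp, Pi.single_apply]
      simp [hz, alp, Pi.single_apply] at h1
    · obtain ⟨j, hj⟩ := Finset.card_eq_one.mp hc1
      have hsum' : γ j + ∑ i ∈ Finset.univ.erase j, γ i = alp 1 - alp 2 := by
        rw [← hsum, Finset.add_sum_erase _ _ (Finset.mem_univ j)]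
      set m : ℤ := ∑ i ∈ Finset.univ.erase j, γ i (.inl (.inl 0)) with hm
      have herase : ∑ i ∈ Finset.univ.erase j, γ i = m • alp 0 := by
        rw [hm, Finset.sum_smul]
        refine Finset.sum_congr rfl fun i hi => ?_
        have hiS : i ∉ S := by
          rw [hj]
          simp [Finset.mem_erase.mp hi |>.1]
        exact hc i hiS
      rw [herase] at hsum'
      have hγj : γ j = alp 1 - alp 2 - m • alp 0 := eq_sub_of_add_eq hsum'
      have hs := hsq j
      rw [hγj, bI_key] at hs
      nlinarith [sq_nonneg m]
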